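/- Let d ≥ 1, α ∈ ℝ, P ∈ Matrix (Fin d) (Fin d) ℝ, and C > 0 a real constant, and define the density-shaped function f : (Fin d → ℝ) → ℝ by f(x) = C · Real.exp(−(1/2) · (x ⬝ᵥ (P.mulVec x))). Then for all x, z ∈ Fin d → ℝ, letting x' := cos α • x + sin α • z and z' := sin α • x − cos α • z (the elliptical rotation map T_α applied to (x, z)), one has f(x') · f(z') = f(x) · f(z). -/
import Mathlib


open Matrix

/-- Invariance of the (unnormalized) Gaussian density product under the elliptical
rotation: for `f x = C * exp(−(1/2) xᵀ P x)`, with `x' = cos α • x + sin α • z` and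
`z' = sin α • x − cos α • z`, one has `f x' * f z' = f x * f z`. -/
theorem elliptical_rotation_gaussian_density_invariant
    (d : ℕ) (hd : 1 ≤ d) (α : ℝ) (P : Matrix (Fin d) (Fin d) ℝ) (C : ℝ) (hC : 0 < C)
    (x z : Fin d → ℝ) :
    (fun y : Fin d → ℝ => C * Real.exp (-(1 / 2) * (y ⬝ᵥ P.mulVec y)))
        (Real.cos α • x + Real.sin α • z) *
      (fun y : Fin d → ℝ => C * Real.exp (-(1 / 2) * (y ⬝ᵥ P.mulVec y)))
        (Real.sin α • x - Real.cos α • z) =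
    (fun y : Fin d → ℝ => C * Real.exp (-(1 / 2) * (y ⬝ᵥ P.mulVec y))) x *
      (fun y : Fin d → ℝ => C * Real.exp (-(1 / 2) * (y ⬝ᵥ P.mulVec y))) z := by
  simp only
  rw [mul_mul_mul_comm, ← Real.exp_add, mul_mul_mul_comm, ← Real.exp_add]
  congr 1
  simp only [mulVec_add, mulVec_sub, mulVec_smul, dotProduct_add, dotProduct_sub,
    add_dotProduct, sub_dotProduct, smul_dotProduct, dotProduct_smul, smul_eq_mul]
  congr 1
  have h := Real.sin_sq_add_cos_sq α
  linear_combination ((-(1/2)) * (x ⬝ᵥ P.mulVec x) + (-(1/2)) * (z ⬝ᵥ P.mulVec z)) * h
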